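/- arXiv:2402.01543 — 2 statements merged into one kernel-verified Lean document; each statement's English description precedes it below -/
import Mathlib

section
/- Let f*(X, M) = Σ_{m ∈ {0,1}^d} (Σ_{j=1}^d w*_{j,m} (1 - M_j) X_j) · 1(M = m), assume |f*(x, m)| ≤ L for all x in the support and all m ∈ {0,1}^d, and fix X. Viewing f*(X, ·) as a polynomial function of M ∈ ℝ^d (via the multilinear extension of the indicators), every mixed partial derivative of order t with respect to distinct coordinates of M is bounded in absolute value by 2^t L at every binary point evaluation context: specifically |∂^t f*/∂M_{j_1}⋯∂M_{j_t}| ≤ 2^t L, since the sum defining the derivative has at most 2^t nonzero terms each bounded by L. -/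
noncomputable section

/-- Real value of a Boolean coordinate. -/
def bval (b : Bool) : ℝ := if b then 1 else 0

/-- Partial derivative of `f : ℝ^d → ℝ` with respect to coordinate `j`. -/
def pderiv' {d : ℕ} (j : Fin d) (f : (Fin d → ℝ) → ℝ) : (Fin d → ℝ) → ℝ :=
  fun x => fderiv ℝ f x (Pi.single j 1)

/-- Mixed partial derivative of `f` with respect to the list of coordinates `L`. -/
def mixedPartial {d : ℕ} (L : List (Fin d)) (f : (Fin d → ℝ) → ℝ) : (Fin d → ℝ) → ℝ :=
  L.foldr pderiv' f

/-- The multilinear-extension factor. -/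
def gAux (b : Bool) (x : ℝ) : ℝ := 1 - x - bval b + 2 * x * bval b

lemma hasFDerivAt_gAux {d : ℕ} (b : Bool) (i : Fin d) (M : Fin d → ℝ) :
    HasFDerivAt (fun M : Fin d → ℝ => gAux b (M i))
      ((2 * bval b - 1) • (ContinuousLinearMap.proj i : (Fin d → ℝ) →L[ℝ] ℝ)) M := by
  have h1 := (ContinuousLinearMap.proj (R := ℝ) (φ := fun _ : Fin d => ℝ) i).hasFDerivAt (x := M)
  have h2 := (h1.const_mul (2 * bval b - 1)).add_const (1 - bval b)
  have heq : (fun M : Fin d → ℝ => gAux b (M i))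
      = fun M : Fin d → ℝ => (2 * bval b - 1) * M i + (1 - bval b) := by
    funext M; simp only [gAux]; ring
  rw [heq]
  exact h2

lemma pderiv'_eq {d : ℕ} (S : Finset (Fin d)) (c : (Fin d → Bool) → ℝ) (j : Fin d)
    (hjS : j ∈ S) :
    pderiv' j (fun M => ∑ m : Fin d → Bool, c m * ∏ i ∈ S, gAux (m i) (M i))
      = fun M => ∑ m : Fin d → Bool,
          (c m * (2 * bval (m j) - 1)) * ∏ i ∈ S.erase j, gAux (m i) (M i) := by
  funext M
  have hD : ∀ m : Fin d → Bool,
      HasFDerivAt (fun M : Fin d → ℝ => ∏ i ∈ S, gAux (m i) (M i))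
        (∑ i ∈ S, (∏ k ∈ S.erase i, gAux (m k) (M k)) •
          ((2 * bval (m i) - 1) • (ContinuousLinearMap.proj i : (Fin d → ℝ) →L[ℝ] ℝ))) M :=
    fun m => HasFDerivAt.finset_prod (fun i _ => hasFDerivAt_gAux (m i) i M)
  have hF : HasFDerivAt
      (fun M : Fin d → ℝ => ∑ m : Fin d → Bool, c m * ∏ i ∈ S, gAux (m i) (M i))
      (∑ m : Fin d → Bool, c m •
        (∑ i ∈ S, (∏ k ∈ S.erase i, gAux (m k) (M k)) •
          ((2 * bval (m i) - 1) • (ContinuousLinearMap.proj i : (Fin d → ℝ) →L[ℝ] ℝ)))) M :=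
    HasFDerivAt.fun_sum (fun m _ => (hD m).const_mul (c m))
  show fderiv ℝ _ M (Pi.single j 1) = _
  rw [hF.fderiv, ContinuousLinearMap.sum_apply]
  refine Finset.sum_congr rfl fun m _ => ?_
  rw [ContinuousLinearMap.smul_apply, ContinuousLinearMap.sum_apply]
  rw [Finset.sum_eq_single_of_mem j hjS (fun i _ hne => by
    simp [ContinuousLinearMap.proj_apply, Pi.single_eq_of_ne hne])]
  simp only [ContinuousLinearMap.smul_apply, ContinuousLinearMap.proj_apply,
    Pi.single_eq_same, smul_eq_mul]
  ring

lemma mixedPartial_eq {d : ℕ} (ℓ : List (Fin d)) (hnd : ℓ.Nodup) (S : Finset (Fin d))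
    (hsub : ∀ a ∈ ℓ, a ∈ S) (c : (Fin d → Bool) → ℝ) :
    mixedPartial ℓ (fun M => ∑ m : Fin d → Bool, c m * ∏ i ∈ S, gAux (m i) (M i))
      = fun M => ∑ m : Fin d → Bool,
          (c m * ∏ a ∈ ℓ.toFinset, (2 * bval (m a) - 1)) *
            ∏ i ∈ S \ ℓ.toFinset, gAux (m i) (M i) := by
  induction ℓ with
  | nil => simp [mixedPartial]
  | cons a ℓ ih =>
    rw [List.nodup_cons] at hnd
    have hstep : mixedPartial (a :: ℓ) (fun M => ∑ m : Fin d → Bool,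
        c m * ∏ i ∈ S, gAux (m i) (M i))
        = pderiv' a (mixedPartial ℓ (fun M => ∑ m : Fin d → Bool,
            c m * ∏ i ∈ S, gAux (m i) (M i))) := rfl
    rw [hstep, ih hnd.2 (fun b hb => hsub b (List.mem_cons_of_mem a hb))]
    have haS : a ∈ S \ ℓ.toFinset := Finset.mem_sdiff.mpr
      ⟨hsub a (List.mem_cons_self), by simpa using hnd.1⟩
    rw [pderiv'_eq (S \ ℓ.toFinset)
      (fun m => c m * ∏ a ∈ ℓ.toFinset, (2 * bval (m a) - 1)) a haS]
    funext M
    refine Finset.sum_congr rfl fun m _ => ?_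
    have hT : (a :: ℓ).toFinset = insert a ℓ.toFinset := by simp
    have hset : S \ (a :: ℓ).toFinset = (S \ ℓ.toFinset).erase a := by
      rw [hT]
      ext x
      simp only [Finset.mem_sdiff, Finset.mem_insert, Finset.mem_erase]
      tauto
    rw [hset, hT, Finset.prod_insert (by simpa using hnd.1)]
    ring

lemma gAux_bval (b b' : Bool) : gAux b (bval b') = if b = b' then 1 else 0 := by
  cases b <;> cases b' <;> norm_num [gAux, bval]

lemma abs_factor (b : Bool) : |2 * bval b - 1| = 1 := by
  cases b <;> norm_num [bval]

/-- If `f*(X̃, M) = ∑_m (∑_j w_{j,m} X̃_j) · 1(M = m)` (with the indicators extended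
multilinearly) and `|∑_j w_{j,m} X̃_j| ≤ L` for every `m`, then every mixed partial
derivative of order `t` with respect to distinct coordinates of `M` is bounded by
`2^t L` at every binary point. -/
theorem mixedPartial_bound (d t : ℕ) (hd : 0 < d) (ht : t ≤ d) (L : ℝ) (hL : 0 < L)
    (w : Fin d → (Fin d → Bool) → ℝ) (Xt : Fin d → ℝ)
    (hbound : ∀ m : Fin d → Bool, |∑ j : Fin d, w j m * Xt j| ≤ L)
    (f : (Fin d → ℝ) → ℝ)
    (hf : f = fun M => ∑ m : Fin d → Bool,
      (∑ j : Fin d, w j m * Xt j) *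
        ∏ i : Fin d, (1 - M i - bval (m i) + 2 * M i * bval (m i)))
    (j : Fin t → Fin d) (hj : Function.Injective j)
    (M : Fin d → Bool) :
    |mixedPartial (List.ofFn j) f (fun i => bval (M i))| ≤ 2 ^ t * L := by
  set c : (Fin d → Bool) → ℝ := fun m => ∑ j : Fin d, w j m * Xt j with hc
  have hf' : f = fun M => ∑ m : Fin d → Bool,
      c m * ∏ i ∈ Finset.univ, gAux (m i) (M i) := by
    rw [hf]; rfl
  have hnd : (List.ofFn j).Nodup := (List.nodup_ofFn).mpr hj
  rw [hf', mixedPartial_eq (List.ofFn j) hnd Finset.univ (fun _ _ => Finset.mem_univ _) c]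
  set T : Finset (Fin d) := (List.ofFn j).toFinset with hTdef
  have hTcard : T.card = t := by
    rw [hTdef, List.toFinset_card_of_nodup hnd, List.length_ofFn]
  -- evaluate each product at the binary point
  have hprod : ∀ m : Fin d → Bool,
      ∏ i ∈ Finset.univ \ T, gAux (m i) (bval (M i))
        = ∏ i ∈ Finset.univ \ T, (if m i = M i then (1 : ℝ) else 0) :=
    fun m => Finset.prod_congr rfl fun i _ => gAux_bval (m i) (M i)
  have hPnn : ∀ m : Fin d → Bool,
      (0 : ℝ) ≤ ∏ i ∈ Finset.univ \ T, (if m i = M i then (1 : ℝ) else 0) :=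
    fun m => Finset.prod_nonneg fun i _ => by positivity
  have habs : ∀ m : Fin d → Bool,
      |(c m * ∏ a ∈ T, (2 * bval (m a) - 1)) *
          ∏ i ∈ Finset.univ \ T, gAux (m i) (bval (M i))|
        ≤ L * ∏ i ∈ Finset.univ \ T, (if m i = M i then (1 : ℝ) else 0) := by
    intro m
    rw [hprod m, abs_mul, abs_mul, Finset.abs_prod,
      Finset.prod_congr rfl (fun a _ => abs_factor (m a)), Finset.prod_const_one, mul_one,
      abs_of_nonneg (hPnn m)]
    exact mul_le_mul_of_nonneg_right (hbound m) (hPnn m)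
  calc |∑ m : Fin d → Bool, (c m * ∏ a ∈ T, (2 * bval (m a) - 1)) *
          ∏ i ∈ Finset.univ \ T, gAux (m i) (bval (M i))|
      ≤ ∑ m : Fin d → Bool, |(c m * ∏ a ∈ T, (2 * bval (m a) - 1)) *
          ∏ i ∈ Finset.univ \ T, gAux (m i) (bval (M i))| :=
        Finset.abs_sum_le_sum_abs _ _
    _ ≤ ∑ m : Fin d → Bool,
          L * ∏ i ∈ Finset.univ \ T, (if m i = M i then (1 : ℝ) else 0) :=
        Finset.sum_le_sum fun m _ => habs m
    _ = L * ∑ m : Fin d → Bool,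
          ∏ i ∈ Finset.univ \ T, (if m i = M i then (1 : ℝ) else 0) := by
        rw [Finset.mul_sum]
    _ = 2 ^ t * L := by
        have hext : ∀ m : Fin d → Bool,
            ∏ i ∈ Finset.univ \ T, (if m i = M i then (1 : ℝ) else 0)
              = ∏ i : Fin d,
                (if i ∈ Finset.univ \ T then (if m i = M i then (1 : ℝ) else 0) else 1) := by
          intro m
          rw [Finset.prod_ite_mem Finset.univ (Finset.univ \ T)
            (fun i => if m i = M i then (1 : ℝ) else 0), Finset.univ_inter]
        have hsum : ∑ m : Fin d → Bool, ∏ i : Fin d,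
            (if i ∈ Finset.univ \ T then (if m i = M i then (1 : ℝ) else 0) else 1)
              = ∏ i : Fin d, ∑ b : Bool,
                (if i ∈ Finset.univ \ T then (if b = M i then (1 : ℝ) else 0) else 1) :=
          (Fintype.prod_sum fun i b =>
            if i ∈ Finset.univ \ T then (if b = M i then (1 : ℝ) else 0) else 1).symm
        have hinner : ∀ i : Fin d, (∑ b : Bool,
            (if i ∈ Finset.univ \ T then (if b = M i then (1 : ℝ) else 0) else 1))
              = if i ∈ Finset.univ \ T then 1 else 2 := by
          intro i
          by_cases hi : i ∈ Finset.univ \ T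
          · simp only [hi, if_true]
            cases hMi : M i <;> simp [Fintype.sum_bool]
          · simp [hi, Fintype.sum_bool]
        have : ∑ m : Fin d → Bool,
            ∏ i ∈ Finset.univ \ T, (if m i = M i then (1 : ℝ) else 0) = 2 ^ t := by
          rw [Finset.sum_congr rfl (fun m _ => hext m), hsum,
            Finset.prod_congr rfl (fun i _ => hinner i)]
          have h2 : ∏ i : Fin d, (if i ∈ Finset.univ \ T then (1 : ℝ) else 2)
              = 2 ^ T.card := by
            have hfil : (Finset.univ.filter (fun i : Fin d => ¬ i ∈ Finset.univ \ T)) = T := by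
              ext x; simp
            rw [Finset.prod_ite, Finset.prod_const_one, one_mul, Finset.prod_const, hfil]
          rw [h2, hTcard]
        rw [this]; ring
end
end

section
/- Suppose Y = w*_1 X_1 + ε with E[ε | X_1, M_1] = 0, and define μ_1 = E[Y | M_1 = 1] · E[X_1² | M_1 = 0] / E[Y X_1 | M_1 = 0] with w_1 = E[Y X_1 | M_1 = 0] / E[X_1² | M_1 = 0]. If w*_1 ≠ 0 and E[X_1² | M_1 = 0] > 0, then w_1 = w*_1 and μ_1 = E[X_1 | M_1 = 1]. -/
open MeasureTheory ProbabilityTheory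

/-- If `Y = w*₁ X₁ + ε` with `E[ε | X₁, M₁] = 0`, then the population least-squares
slope on observed data `w₁ = E[Y X₁ | M₁=0] / E[X₁² | M₁=0]` recovers `w*₁`, and the
joint-optimal imputation constant
`μ₁ = E[Y | M₁=1] · E[X₁² | M₁=0] / E[Y X₁ | M₁=0]` equals `E[X₁ | M₁=1]`. -/
theorem joint_impute_recovers_conditional_mean
    {Ω : Type*} [MeasurableSpace Ω] (μ : Measure Ω) [IsProbabilityMeasure μ]
    (X M ε : Ω → ℝ) (hX : Measurable X) (hM : Measurable M) (hε : Measurable ε)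
    (hMbin : ∀ ω, M ω = 0 ∨ M ω = 1)
    (wstar : ℝ) (hwstar : wstar ≠ 0)
    (Y : Ω → ℝ) (hY : Y = fun ω => wstar * X ω + ε ω)
    (h0 : 0 < μ {ω | M ω = 0}) (h1 : 0 < μ {ω | M ω = 1})
    (hεcond : μ[ε | MeasurableSpace.comap (fun ω => (X ω, M ω)) inferInstance] =ᵐ[μ] 0)
    (hXint : Integrable X μ) (hεint : Integrable ε μ)
    (hX2int : Integrable (fun ω => X ω ^ 2) μ)
    (hYXint : Integrable (fun ω => Y ω * X ω) μ)
    (hεXint : Integrable (fun ω => ε ω * X ω) μ)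
    (hX2pos : 0 < ∫ ω, X ω ^ 2 ∂(μ[|{ω | M ω = 0}])) :
    (∫ ω, Y ω * X ω ∂(μ[|{ω | M ω = 0}])) / (∫ ω, X ω ^ 2 ∂(μ[|{ω | M ω = 0}]))
      = wstar ∧
    (∫ ω, Y ω ∂(μ[|{ω | M ω = 1}])) * (∫ ω, X ω ^ 2 ∂(μ[|{ω | M ω = 0}])) /
        (∫ ω, Y ω * X ω ∂(μ[|{ω | M ω = 0}]))
      = ∫ ω, X ω ∂(μ[|{ω | M ω = 1}]) := by
  classical
  rename_i mΩ hprob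
  have hm : MeasurableSpace.comap (fun ω => (X ω, M ω)) inferInstance ≤ mΩ :=
    measurable_iff_comap_le.mp (hX.prodMk hM)
  haveI : SigmaFinite (μ.trim hm) := IsFiniteMeasure.toSigmaFinite _
  set s0 : Set Ω := {ω | M ω = 0} with hs0def
  set s1 : Set Ω := {ω | M ω = 1} with hs1def
  have hs0 : MeasurableSet s0 := hM (measurableSet_singleton 0)
  have hs1 : MeasurableSet s1 := hM (measurableSet_singleton 1)
  have hs0m : MeasurableSet[MeasurableSpace.comap (fun ω => (X ω, M ω)) inferInstance] s0 := by
    refine ⟨Set.univ ×ˢ {(0 : ℝ)}, MeasurableSet.univ.prod (measurableSet_singleton 0), ?_⟩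
    ext ω; simp [hs0def, eq_comm]
  have hs1m : MeasurableSet[MeasurableSpace.comap (fun ω => (X ω, M ω)) inferInstance] s1 := by
    refine ⟨Set.univ ×ˢ {(1 : ℝ)}, MeasurableSet.univ.prod (measurableSet_singleton 1), ?_⟩
    ext ω; simp [hs1def, eq_comm]
  have hXm : Measurable[MeasurableSpace.comap (fun ω => (X ω, M ω)) inferInstance] X := by
    have h : Measurable[MeasurableSpace.comap (fun ω => (X ω, M ω)) inferInstance]
        (fun ω => (X ω, M ω)) := measurable_iff_comap_le.mpr le_rfl
    exact measurable_fst.comp h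
  -- key fact 1: ∫_{s1} ε = 0
  have key1 : ∫ ω in s1, ε ω ∂μ = 0 := by
    rw [← setIntegral_condExp hm hεint hs1m]
    calc ∫ ω in s1, (μ[ε|MeasurableSpace.comap (fun ω => (X ω, M ω)) inferInstance]) ω ∂μ
        = ∫ ω in s1, (0 : ℝ) ∂μ :=
          setIntegral_congr_ae (hm _ hs1m) (hεcond.mono fun ω hω _ => hω)
      _ = 0 := by simp
  -- key fact 2: ∫_{s0} ε X = 0
  have key2 : ∫ ω in s0, ε ω * X ω ∂μ = 0 := by
    set g : Ω → ℝ := s0.indicator X with hgdef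
    have hgm : StronglyMeasurable[MeasurableSpace.comap (fun ω => (X ω, M ω)) inferInstance] g :=
      (hXm.indicator hs0m).stronglyMeasurable
    have hge : (fun ω => g ω * ε ω) = s0.indicator (fun ω => ε ω * X ω) := by
      funext ω
      by_cases hω : ω ∈ s0 <;> simp [hgdef, Set.indicator_apply, hω, mul_comm]
    have hgeint : Integrable (g * ε) μ := by
      have : Integrable (s0.indicator (fun ω => ε ω * X ω)) μ := hεXint.indicator hs0
      rwa [show g * ε = fun ω => g ω * ε ω from rfl, hge]
    have hpull := condExp_mul_of_stronglyMeasurable_left hgm hgeint hεint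
    have hzero : μ[g * ε|MeasurableSpace.comap (fun ω => (X ω, M ω)) inferInstance] =ᵐ[μ] 0 := by
      refine hpull.trans ?_
      filter_upwards [hεcond] with ω hω
      simp [hω]
    have hint : ∫ ω, (g * ε) ω ∂μ = 0 := by
      rw [← integral_condExp hm (f := g * ε), integral_congr_ae hzero]
      simp
    rw [← integral_indicator hs0, ← hge]
    exact hint
  -- Rewrite conditional-measure integrals
  have hcond0 : ∀ f : Ω → ℝ, ∫ ω, f ω ∂(μ[|s0]) = (μ s0)⁻¹.toReal * ∫ ω in s0, f ω ∂μ := by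
    intro f
    rw [show μ[|s0] = (μ s0)⁻¹ • μ.restrict s0 from rfl, integral_smul_measure]
    rfl
  have hcond1 : ∀ f : Ω → ℝ, ∫ ω, f ω ∂(μ[|s1]) = (μ s1)⁻¹.toReal * ∫ ω in s1, f ω ∂μ := by
    intro f
    rw [show μ[|s1] = (μ s1)⁻¹ • μ.restrict s1 from rfl, integral_smul_measure]
    rfl
  set c0 : ℝ := (μ s0)⁻¹.toReal
  set c1 : ℝ := (μ s1)⁻¹.toReal
  have hYXsplit : ∫ ω in s0, Y ω * X ω ∂μ = wstar * ∫ ω in s0, X ω ^ 2 ∂μ := by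
    have h1' : (fun ω => Y ω * X ω) = fun ω => wstar * X ω ^ 2 + ε ω * X ω := by
      funext ω; rw [hY]; ring
    rw [h1', integral_add ((hX2int.const_mul wstar).restrict) (hεXint.restrict),
      integral_const_mul, key2, add_zero]
  have hA : ∫ ω, X ω ^ 2 ∂(μ[|s0]) = c0 * ∫ ω in s0, X ω ^ 2 ∂μ := hcond0 _
  have hB : ∫ ω, Y ω * X ω ∂(μ[|s0]) = wstar * ∫ ω, X ω ^ 2 ∂(μ[|s0]) := by
    rw [hcond0, hYXsplit, hA]; ring
  have hYsplit : ∫ ω in s1, Y ω ∂μ = wstar * ∫ ω in s1, X ω ∂μ := by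
    rw [hY, integral_add ((hXint.const_mul wstar).restrict) (hεint.restrict),
      integral_const_mul, key1, add_zero]
  have hC : ∫ ω, Y ω ∂(μ[|s1]) = wstar * ∫ ω, X ω ∂(μ[|s1]) := by
    rw [hcond1, hYsplit, hcond1]; ring
  have hAne : (∫ ω, X ω ^ 2 ∂(μ[|s0])) ≠ 0 := ne_of_gt hX2pos
  constructor
  · rw [hB, mul_div_assoc, div_self hAne, mul_one]
  · rw [hB, hC]
    field_simp
end
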